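/- Let G be a finite abstract simplicial complex (a finite set of nonempty finite sets closed under taking nonempty subsets) and let h : G → ℂ satisfy |h(x)| = 1 for all x ∈ G. Define L(x,y) = ∑_{z ⊆ x, z ⊆ y, z ∈ G} h(z) and g(x,y) = ω(x)ω(y)∑_{z ⊇ x, z ⊇ y, z ∈ G} h(z) with ω(x) = (-1)^(|x|-1). Then (conj(g)) · L = I, i.e., g* is the inverse of L. -/

import Mathlib

open Finset

/-- A finite abstract simplicial complex: a finite set of nonempty finite sets
closed under taking nonempty subsets. -/
def IsSimplicialComplex (G : Finset (Finset ℕ)) : Prop :=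
  (∀ x ∈ G, x.Nonempty) ∧ ∀ x ∈ G, ∀ y ⊆ x, y.Nonempty → y ∈ G

lemma keyC (w z : Finset ℕ) (hw : w.Nonempty) (hwz : w ⊆ z) :
    ∑ u ∈ z.powerset.filter (fun u => w ⊆ u), (-1:ℂ)^(u.card - 1)
      = if w = z then (-1:ℂ)^(w.card-1) else 0 := by
  have hbij : ∑ u ∈ z.powerset.filter (fun u => w ⊆ u), (-1:ℂ)^(u.card - 1)
      = ∑ s ∈ (z \ w).powerset, (-1:ℂ)^((s ∪ w).card - 1) := by
    refine Finset.sum_nbij' (fun u => u \ w) (fun s => s ∪ w) ?_ ?_ ?_ ?_ ?_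
    · intro u hu
      simp only [mem_filter, mem_powerset] at hu ⊢
      exact sdiff_subset_sdiff hu.1 le_rfl
    · intro s hs
      simp only [mem_powerset] at hs
      simp only [mem_filter, mem_powerset]
      exact ⟨union_subset (hs.trans sdiff_subset) hwz, subset_union_right⟩
    · intro u hu
      simp only [mem_filter, mem_powerset] at hu
      exact sdiff_union_of_subset hu.2
    · intro s hs
      simp only [mem_powerset] at hs
      have hd : Disjoint s w := Finset.sdiff_disjoint.mono_left hs
      rw [union_sdiff_right, sdiff_eq_self_of_disjoint hd]
    · intro u hu
      simp only [mem_filter, mem_powerset] at hu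
      rw [sdiff_union_of_subset hu.2]
  rw [hbij]
  have hwc : 1 ≤ w.card := card_pos.mpr hw
  have hval : ∀ s ∈ (z \ w).powerset,
      (-1:ℂ)^((s ∪ w).card - 1) = (-1:ℂ)^(w.card - 1) * (-1:ℂ)^s.card := by
    intro s hs
    simp only [mem_powerset] at hs
    have hd : Disjoint s w := Finset.sdiff_disjoint.mono_left hs
    rw [card_union_of_disjoint hd,
      show s.card + w.card - 1 = s.card + (w.card - 1) by omega, pow_add, mul_comm]
  rw [Finset.sum_congr rfl hval, ← Finset.mul_sum]
  have hps : ∑ s ∈ (z \ w).powerset, (-1:ℂ)^s.card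
      = if z \ w = ∅ then 1 else 0 := by
    have h1 := Finset.sum_powerset_neg_one_pow_card (x := z \ w)
    have h2 : ((∑ m ∈ (z \ w).powerset, (-1 : ℤ) ^ m.card : ℤ) : ℂ)
        = ∑ s ∈ (z \ w).powerset, (-1:ℂ)^s.card := by push_cast; rfl
    rw [h1] at h2
    rw [← h2]
    split <;> simp
  rw [hps]
  have hiff : z \ w = ∅ ↔ w = z := by
    rw [sdiff_eq_empty_iff_subset]
    exact ⟨fun h => subset_antisymm hwz h, fun h => h ▸ le_rfl⟩
  by_cases hc : w = z
  · rw [if_pos (hiff.mpr hc), if_pos hc, mul_one]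
  · rw [if_neg (fun e => hc (hiff.mp e)), if_neg hc, mul_zero]

lemma keyG (G : Finset (Finset ℕ)) (hG : IsSimplicialComplex G)
    {a b : Finset ℕ} (ha : a ∈ G) (hb : b ∈ G) :
    ∑ u ∈ G.filter (fun u => a ⊆ u ∧ u ⊆ b), (-1:ℂ)^(u.card - 1)
      = if a = b then (-1:ℂ)^(a.card-1) else 0 := by
  by_cases hab : a ⊆ b
  · have hset : G.filter (fun u => a ⊆ u ∧ u ⊆ b)
        = b.powerset.filter (fun u => a ⊆ u) := by
      ext u
      simp only [mem_filter, mem_powerset]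
      constructor
      · rintro ⟨-, h1, h2⟩; exact ⟨h2, h1⟩
      · rintro ⟨h2, h1⟩
        exact ⟨hG.2 b hb u h2 ((hG.1 a ha).mono h1), h1, h2⟩
    rw [hset]
    exact keyC a b (hG.1 a ha) hab
  · have hz : ∑ u ∈ G.filter (fun u => a ⊆ u ∧ u ⊆ b), (-1:ℂ)^(u.card - 1) = 0 := by
      apply Finset.sum_eq_zero
      intro u hu
      simp only [mem_filter] at hu
      exact absurd (hu.2.1.trans hu.2.2) hab
    rw [hz, if_neg (fun e => hab (le_of_eq e))]

lemma main_sum (G : Finset (Finset ℕ)) (hG : IsSimplicialComplex G)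
    (h : Finset ℕ → ℂ) (hu : ∀ x ∈ G, ‖h x‖ = 1)
    {x y : Finset ℕ} (hx : x ∈ G) (hy : y ∈ G) :
    ∑ u ∈ G, ((-1:ℂ)^(x.card-1) * (-1:ℂ)^(u.card-1) *
        ∑ z ∈ G.filter (fun z => x ⊆ z ∧ u ⊆ z), (starRingEnd ℂ) (h z)) *
      ∑ w ∈ G.filter (fun w => w ⊆ u ∧ w ⊆ y), h w
      = if x = y then 1 else 0 := by
  set c : ℂ := (-1:ℂ)^(x.card-1) with hc
  calc
    ∑ u ∈ G, (c * (-1:ℂ)^(u.card-1) *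
        ∑ z ∈ G.filter (fun z => x ⊆ z ∧ u ⊆ z), (starRingEnd ℂ) (h z)) *
      ∑ w ∈ G.filter (fun w => w ⊆ u ∧ w ⊆ y), h w
      = ∑ u ∈ G, ∑ z ∈ G, ∑ w ∈ G,
          (if x ⊆ z then (starRingEnd ℂ) (h z) else 0) *
          (if w ⊆ y then h w else 0) * c *
          (if w ⊆ u ∧ u ⊆ z then (-1:ℂ)^(u.card-1) else 0) := by
      refine Finset.sum_congr rfl fun u _ => ?_
      rw [Finset.sum_filter, Finset.sum_filter]
      conv_lhs => lhs; rw [Finset.mul_sum]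
      rw [Finset.sum_mul_sum]
      refine Finset.sum_congr rfl fun z _ => Finset.sum_congr rfl fun w _ => ?_
      by_cases h1 : x ⊆ z <;> by_cases h2 : u ⊆ z <;> by_cases h3 : w ⊆ u <;>
        by_cases h4 : w ⊆ y <;> simp [h1, h2, h3, h4] <;> ring
    _ = ∑ z ∈ G, ∑ w ∈ G,
          (if x ⊆ z then (starRingEnd ℂ) (h z) else 0) *
          (if w ⊆ y then h w else 0) * c *
          (if w = z then (-1:ℂ)^(w.card-1) else 0) := by
      rw [Finset.sum_comm]
      refine Finset.sum_congr rfl fun z hz => ?_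
      rw [Finset.sum_comm]
      refine Finset.sum_congr rfl fun w hw => ?_
      rw [← Finset.mul_sum, ← Finset.sum_filter, keyG G hG hw hz]
    _ = ∑ z ∈ G,
          (if x ⊆ z then (starRingEnd ℂ) (h z) else 0) *
          (if z ⊆ y then h z else 0) * c * (-1:ℂ)^(z.card-1) := by
      refine Finset.sum_congr rfl fun z hz => ?_
      simp only [mul_ite, mul_zero]
      rw [Finset.sum_ite_eq' G z, if_pos hz]
    _ = ∑ z ∈ G, (if x ⊆ z ∧ z ⊆ y then c * (-1:ℂ)^(z.card-1) else 0) := by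
      refine Finset.sum_congr rfl fun z hz => ?_
      have hone : (starRingEnd ℂ) (h z) * h z = 1 := by
        have hn : Complex.normSq (h z) = 1 := by
          rw [Complex.normSq_eq_norm_sq, hu z hz, one_pow]
        rw [mul_comm, Complex.mul_conj, hn, Complex.ofReal_one]
      by_cases h1 : x ⊆ z
      · by_cases h2 : z ⊆ y
        · rw [if_pos h1, if_pos h2, if_pos ⟨h1, h2⟩]
          calc (starRingEnd ℂ) (h z) * h z * c * (-1:ℂ)^(z.card-1)
              = ((starRingEnd ℂ) (h z) * h z) * (c * (-1:ℂ)^(z.card-1)) := by ring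
            _ = c * (-1:ℂ)^(z.card-1) := by rw [hone, one_mul]
        · rw [if_neg h2, if_neg (show ¬(x ⊆ z ∧ z ⊆ y) from fun hc2 => h2 hc2.2), mul_zero, zero_mul, zero_mul]
      · rw [if_neg h1, if_neg (show ¬(x ⊆ z ∧ z ⊆ y) from fun hc2 => h1 hc2.1), zero_mul, zero_mul, zero_mul]
    _ = c * ∑ z ∈ G.filter (fun z => x ⊆ z ∧ z ⊆ y), (-1:ℂ)^(z.card-1) := by
      rw [← Finset.sum_filter, Finset.mul_sum]
    _ = if x = y then 1 else 0 := by
      rw [keyG G hG hx hy]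
      by_cases hxy : x = y
      · rw [if_pos hxy, if_pos hxy, hc, ← mul_pow]
        norm_num
      · rw [if_neg hxy, if_neg hxy, mul_zero]

theorem stmt3 (G : Finset (Finset ℕ)) (hG : IsSimplicialComplex G)
    (h : Finset ℕ → ℂ) (hu : ∀ x ∈ G, ‖h x‖ = 1)
    (L g : Matrix {x // x ∈ G} {x // x ∈ G} ℂ)
    (hL : L = Matrix.of (fun x y =>
      ∑ z ∈ G.filter (fun z => z ⊆ x.1 ∧ z ⊆ y.1), h z))
    (hg : g = Matrix.of (fun x y =>
      (-1 : ℂ) ^ (x.1.card - 1) * (-1 : ℂ) ^ (y.1.card - 1) *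
        ∑ z ∈ G.filter (fun z => x.1 ⊆ z ∧ y.1 ⊆ z), h z)) :
    g.map (starRingEnd ℂ) * L = 1 := by
  ext x y
  rw [Matrix.mul_apply]
  set F : Finset ℕ → ℂ := fun u =>
    ((-1:ℂ)^(x.1.card-1) * (-1:ℂ)^(u.card-1) *
        ∑ z ∈ G.filter (fun z => x.1 ⊆ z ∧ u ⊆ z), (starRingEnd ℂ) (h z)) *
      ∑ w ∈ G.filter (fun w => w ⊆ u ∧ w ⊆ y.1), h w with hF
  have hterm : ∀ u : {x // x ∈ G},
      g.map (starRingEnd ℂ) x u * L u y = F u.1 := by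
    intro u
    rw [hg, hL, hF]
    simp only [Matrix.map_apply, Matrix.of_apply, map_mul, map_pow, map_neg, map_one,
      map_sum]
  calc ∑ u, g.map (starRingEnd ℂ) x u * L u y
      = ∑ u ∈ G.attach, F u.1 := by
        rw [Finset.univ_eq_attach]
        exact Finset.sum_congr rfl fun u _ => hterm u
    _ = ∑ u ∈ G, F u := Finset.sum_attach G F
    _ = if x.1 = y.1 then 1 else 0 := main_sum G hG h hu x.2 y.2
    _ = (1 : Matrix {x // x ∈ G} {x // x ∈ G} ℂ) x y := by
        rw [Matrix.one_apply]
        exact if_congr Subtype.ext_iff.symm rfl rfl
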